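/- The linear discrete-time system (A) is P-strongly exponentially dichotomic if and only if there exist constants D ≥ 1, d > 0 and c with 0 ≤ c < d such that for all natural numbers m ≥ n ≥ p and all x ∈ X, the series Σ_{j=n}^{∞} e^{d(j−n)}‖𝒜_P(j,p)x‖ converges and Σ_{j=n}^{∞} e^{d(j−n)}‖𝒜_P(j,p)x‖ + Σ_{k=n}^{m} e^{d(m−k)}‖𝒜_Q(k,n)x‖ ≤ D(e^{cn}‖𝒜_P(n,p)x‖ + e^{cm}‖𝒜_Q(m,n)x‖). -/

import Mathlib

open Real

/-- The evolution operator started at time `n`, after `k` steps: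
`A(n+k) ⋯ A(n+1)`. -/
noncomputable def evolFrom {X : Type*} [NormedAddCommGroup X] [NormedSpace ℝ X]
    (A : ℕ → X →L[ℝ] X) (n : ℕ) : ℕ → X →L[ℝ] X
  | 0 => 1
  | k + 1 => (A (n + k + 1)).comp (evolFrom A n k)

/-- The evolution operator `𝒜(m,n) = A(m) ⋯ A(n+1)` for `m ≥ n`, `𝒜(n,n) = I`. -/
noncomputable def evol {X : Type*} [NormedAddCommGroup X] [NormedSpace ℝ X]
    (A : ℕ → X →L[ℝ] X) (m n : ℕ) : X →L[ℝ] X :=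
  evolFrom A n (m - n)

/-- `𝒜_P(m,n) = 𝒜(m,n) P(n)`. -/
noncomputable def evolP {X : Type*} [NormedAddCommGroup X] [NormedSpace ℝ X]
    (A P : ℕ → X →L[ℝ] X) (m n : ℕ) : X →L[ℝ] X :=
  (evol A m n).comp (P n)

/-- `𝒜_Q(m,n) = 𝒜(m,n) Q(n)` where `Q(n) = I - P(n)`. -/
noncomputable def evolQ {X : Type*} [NormedAddCommGroup X] [NormedSpace ℝ X]
    (A P : ℕ → X →L[ℝ] X) (m n : ℕ) : X →L[ℝ] X :=
  (evol A m n).comp (1 - P n)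

/-- The system is P-strongly exponentially dichotomic. -/
def IsSED {X : Type*} [NormedAddCommGroup X] [NormedSpace ℝ X]
    (A P : ℕ → X →L[ℝ] X) : Prop :=
  ∃ N α β : ℝ, 1 ≤ N ∧ 0 < α ∧ 0 ≤ β ∧ β < α ∧
    ∀ m n : ℕ, n ≤ m → ∀ x : X,
      exp (α * ((m : ℝ) - n)) * (‖evolP A P m n x‖ + ‖(1 - P n) x‖) ≤
        N * (exp (β * n) * ‖P n x‖ + exp (β * m) * ‖evolQ A P m n x‖)

section Aux
variable {X : Type*} [NormedAddCommGroup X] [NormedSpace ℝ X]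

lemma evolFrom_add (A : ℕ → X →L[ℝ] X) (n a b : ℕ) :
    evolFrom A n (a + b) = (evolFrom A (n + a) b).comp (evolFrom A n a) := by
  induction b with
  | zero => ext x; simp [evolFrom]
  | succ b ih =>
      show evolFrom A n ((a + b) + 1) = _
      rw [evolFrom, ih]
      show _ = ((A (n + a + b + 1)).comp (evolFrom A (n + a) b)).comp (evolFrom A n a)
      rw [ContinuousLinearMap.comp_assoc, Nat.add_assoc n a b]

lemma evol_self (A : ℕ → X →L[ℝ] X) (n : ℕ) (x : X) : evol A n n x = x := by
  simp [evol, evolFrom]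

lemma evol_evol (A : ℕ → X →L[ℝ] X) {n k m : ℕ} (hnk : n ≤ k) (hkm : k ≤ m) (x : X) :
    evol A m k (evol A k n x) = evol A m n x := by
  have h1 : m - n = (k - n) + (m - k) := by omega
  have h2 : n + (k - n) = k := by omega
  rw [evol, evol, evol, h1, evolFrom_add, h2, ContinuousLinearMap.comp_apply]

lemma evolFrom_P (A P : ℕ → X →L[ℝ] X)
    (hCompat : ∀ n, (A (n + 1)).comp (P n) = (P (n + 1)).comp (A (n + 1)))
    (n k : ℕ) (x : X) : evolFrom A n k (P n x) = P (n + k) (evolFrom A n k x) := by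
  induction k with
  | zero => simp [evolFrom]
  | succ k ih =>
      have h := congrFun (congrArg DFunLike.coe (hCompat (n + k))) (evolFrom A n k x)
      simp only [ContinuousLinearMap.comp_apply] at h
      simp only [evolFrom, ContinuousLinearMap.comp_apply, ih, h]
      norm_num [Nat.add_assoc]

lemma P_evol (A P : ℕ → X →L[ℝ] X)
    (hCompat : ∀ n, (A (n + 1)).comp (P n) = (P (n + 1)).comp (A (n + 1)))
    {n m : ℕ} (h : n ≤ m) (x : X) : P m (evol A m n x) = evol A m n (P n x) := by
  have h2 : n + (m - n) = m := by omega
  conv_lhs => rw [← h2]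
  rw [evol, evol, Nat.add_sub_cancel_left]
  exact (evolFrom_P A P hCompat n (m - n) x).symm

end Aux

/-- Proposition (characterization of strong exponential dichotomy). -/
theorem strong_exponential_dichotomy_iff
    {X : Type*} [NormedAddCommGroup X] [NormedSpace ℝ X] [CompleteSpace X]
    (A P : ℕ → X →L[ℝ] X)
    (hProj : ∀ n, (P n).comp (P n) = P n)
    (hCompat : ∀ n, (A (n + 1)).comp (P n) = (P (n + 1)).comp (A (n + 1))) :
    IsSED A P ↔
      ∃ D d c : ℝ, 1 ≤ D ∧ 0 < d ∧ 0 ≤ c ∧ c < d ∧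
        ∀ m n p : ℕ, p ≤ n → n ≤ m → ∀ x : X,
          Summable (fun j : ℕ => exp (d * j) * ‖evolP A P (n + j) p x‖) ∧
          (∑' j : ℕ, exp (d * j) * ‖evolP A P (n + j) p x‖) +
              ∑ k ∈ Finset.Icc n m, exp (d * ((m : ℝ) - k)) * ‖evolQ A P k n x‖ ≤
            D * (exp (c * n) * ‖evolP A P n p x‖ + exp (c * m) * ‖evolQ A P m n x‖) := by
  constructor
  · rintro ⟨N, α, β, hN, hα, hβ0, hβα, hsed⟩
    have hN0 : (0:ℝ) ≤ N := le_trans zero_le_one hN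
    set d := (α + β) / 2 with hd_def
    set r := Real.exp (d - α) with hr_def
    have hr0 : (0:ℝ) < r := exp_pos _
    have hr1 : r < 1 := by
      rw [hr_def, exp_lt_one_iff]
      rw [hd_def]; linarith
    have h1r : (0:ℝ) < 1 - r := by linarith
    have hinv1 : (1:ℝ) ≤ (1 - r)⁻¹ := by
      rw [one_le_inv_iff₀]; exact ⟨h1r, by linarith⟩
    have hinv0 : (0:ℝ) ≤ (1 - r)⁻¹ := le_trans zero_le_one hinv1
    refine ⟨N * (1 - r)⁻¹, d, β, ?_, ?_, hβ0, ?_, ?_⟩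
    · nlinarith
    · rw [hd_def]; linarith
    · rw [hd_def]; linarith
    intro m n p hpn hnm x
    have hgeomS : Summable (fun j : ℕ => r ^ j) :=
      summable_geometric_of_lt_one hr0.le hr1
    set y := evolP A P n p x with hy_def
    have hPP : ∀ q : ℕ, ∀ v : X, P q (P q v) = P q v := by
      intro q v
      have := congrFun (congrArg DFunLike.coe (hProj q)) v
      simpa using this
    have hPy : P n y = y := by
      rw [hy_def]
      simp only [evolP, ContinuousLinearMap.comp_apply]
      rw [P_evol A P hCompat hpn, hPP]
    -- pointwise bound for the P–sum
    have keyP : ∀ j : ℕ, exp (d * j) * ‖evolP A P (n + j) p x‖ ≤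
        N * exp (β * n) * ‖y‖ * r ^ j := by
      intro j
      have hle : n ≤ n + j := Nat.le_add_right _ _
      have e1 : evolP A P (n + j) n y = evolP A P (n + j) p x := by
        simp only [evolP, ContinuousLinearMap.comp_apply, hPy]
        rw [hy_def]
        simp only [evolP, ContinuousLinearMap.comp_apply]
        exact evol_evol A hpn hle _
      have hz : (1 - P n) y = 0 := by
        simp [ContinuousLinearMap.sub_apply, hPy]
      have e2 : evolQ A P (n + j) n y = 0 := by
        simp only [evolQ, ContinuousLinearMap.comp_apply, hz, map_zero]
      have h1 := hsed (n + j) n hle y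
      rw [e1, e2, hz, hPy] at h1
      simp only [norm_zero, mul_zero, add_zero] at h1
      have hcast : ((n + j : ℕ) : ℝ) - (n : ℝ) = (j : ℝ) := by push_cast; ring
      rw [hcast] at h1
      have hrj : exp (d * j) = r ^ j * exp (α * j) := by
        rw [hr_def, ← exp_nat_mul, ← exp_add]
        congr 1; ring
      calc exp (d * j) * ‖evolP A P (n + j) p x‖
          = r ^ j * (exp (α * j) * ‖evolP A P (n + j) p x‖) := by rw [hrj]; ring
        _ ≤ r ^ j * (N * (exp (β * n) * ‖y‖)) :=
            mul_le_mul_of_nonneg_left h1 (pow_nonneg hr0.le j)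
        _ = N * exp (β * n) * ‖y‖ * r ^ j := by ring
    have hgeom : Summable (fun j : ℕ => N * exp (β * n) * ‖y‖ * r ^ j) :=
      hgeomS.mul_left _
    have hpos : ∀ j : ℕ, 0 ≤ exp (d * j) * ‖evolP A P (n + j) p x‖ := fun j => by positivity
    have hsummable : Summable (fun j : ℕ => exp (d * j) * ‖evolP A P (n + j) p x‖) :=
      Summable.of_nonneg_of_le hpos keyP hgeom
    refine ⟨hsummable, ?_⟩
    have htsum : (∑' j : ℕ, exp (d * j) * ‖evolP A P (n + j) p x‖) ≤
        N * exp (β * n) * ‖y‖ * (1 - r)⁻¹ := by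
      calc (∑' j : ℕ, exp (d * j) * ‖evolP A P (n + j) p x‖)
          ≤ ∑' j : ℕ, N * exp (β * n) * ‖y‖ * r ^ j :=
            Summable.tsum_le_tsum keyP hsummable hgeom
        _ = N * exp (β * n) * ‖y‖ * (1 - r)⁻¹ := by
            rw [tsum_mul_left, tsum_geometric_of_lt_one hr0.le hr1]
    -- pointwise bound for the Q–sum
    have keyQ : ∀ k ∈ Finset.Icc n m, exp (d * ((m : ℝ) - k)) * ‖evolQ A P k n x‖ ≤
        N * exp (β * m) * ‖evolQ A P m n x‖ * r ^ (m - k) := by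
      intro k hk
      rw [Finset.mem_Icc] at hk
      obtain ⟨hnk, hkm⟩ := hk
      set z := evolQ A P k n x with hz_def
      have hPz : P k z = 0 := by
        rw [hz_def]
        simp only [evolQ, ContinuousLinearMap.comp_apply, ContinuousLinearMap.sub_apply,
          ContinuousLinearMap.one_apply]
        rw [map_sub, map_sub, P_evol A P hCompat hnk, P_evol A P hCompat hnk, hPP, sub_self]
      have hz1 : (1 - P k) z = z := by
        simp [ContinuousLinearMap.sub_apply, hPz]
      have eP : evolP A P m k z = 0 := by
        simp only [evolP, ContinuousLinearMap.comp_apply, hPz, map_zero]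
      have eQ : evolQ A P m k z = evolQ A P m n x := by
        simp only [evolQ, ContinuousLinearMap.comp_apply]
        rw [show (1 - P k) z = z from hz1, hz_def]
        simp only [evolQ, ContinuousLinearMap.comp_apply]
        exact evol_evol A hnk hkm _
      have h2 := hsed m k hkm z
      rw [eP, eQ, hPz, hz1] at h2
      simp only [norm_zero, zero_add, mul_zero, add_zero] at h2
      have hrk : exp (d * ((m : ℝ) - k)) = r ^ (m - k) * exp (α * ((m : ℝ) - k)) := by
        rw [hr_def, ← exp_nat_mul, ← exp_add, Nat.cast_sub hkm]
        congr 1; ring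
      calc exp (d * ((m : ℝ) - k)) * ‖z‖
          = r ^ (m - k) * (exp (α * ((m : ℝ) - k)) * ‖z‖) := by rw [hrk]; ring
        _ ≤ r ^ (m - k) * (N * (exp (β * m) * ‖evolQ A P m n x‖)) :=
            mul_le_mul_of_nonneg_left h2 (pow_nonneg hr0.le _)
        _ = N * exp (β * m) * ‖evolQ A P m n x‖ * r ^ (m - k) := by ring
    have hsumQ : (∑ k ∈ Finset.Icc n m, exp (d * ((m : ℝ) - k)) * ‖evolQ A P k n x‖) ≤
        N * exp (β * m) * ‖evolQ A P m n x‖ * (1 - r)⁻¹ := by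
      have hC0 : 0 ≤ N * exp (β * m) * ‖evolQ A P m n x‖ :=
        mul_nonneg (mul_nonneg hN0 (exp_pos _).le) (norm_nonneg _)
      calc (∑ k ∈ Finset.Icc n m, exp (d * ((m : ℝ) - k)) * ‖evolQ A P k n x‖)
          ≤ ∑ k ∈ Finset.Icc n m, N * exp (β * m) * ‖evolQ A P m n x‖ * r ^ (m - k) :=
            Finset.sum_le_sum keyQ
        _ = N * exp (β * m) * ‖evolQ A P m n x‖ * ∑ k ∈ Finset.Icc n m, r ^ (m - k) := by
            rw [Finset.mul_sum]
        _ ≤ N * exp (β * m) * ‖evolQ A P m n x‖ * (1 - r)⁻¹ := by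
            apply mul_le_mul_of_nonneg_left _ hC0
            calc (∑ k ∈ Finset.Icc n m, r ^ (m - k))
                = ∑ i ∈ (Finset.Icc n m).image (fun k => m - k), r ^ i :=
                  (Finset.sum_image (fun a ha b hb h => by
                    simp only [Finset.coe_Icc, Set.mem_Icc, Finset.mem_coe, Finset.mem_Icc] at ha hb; omega)).symm
              _ ≤ ∑' i : ℕ, r ^ i :=
                  Summable.sum_le_tsum _ (fun i _ => pow_nonneg hr0.le i) hgeomS
              _ = (1 - r)⁻¹ := tsum_geometric_of_lt_one hr0.le hr1
    calc (∑' j : ℕ, exp (d * j) * ‖evolP A P (n + j) p x‖) +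
          ∑ k ∈ Finset.Icc n m, exp (d * ((m : ℝ) - k)) * ‖evolQ A P k n x‖
        ≤ N * exp (β * n) * ‖y‖ * (1 - r)⁻¹ +
            N * exp (β * m) * ‖evolQ A P m n x‖ * (1 - r)⁻¹ := add_le_add htsum hsumQ
      _ = N * (1 - r)⁻¹ * (exp (β * n) * ‖y‖ + exp (β * m) * ‖evolQ A P m n x‖) := by ring
  · rintro ⟨D, d, c, hD, hd, hc0, hcd, hmain⟩
    refine ⟨D, d, c, hD, hd, hc0, hcd, ?_⟩
    intro m n hnm x
    obtain ⟨hsum, hineq⟩ := hmain m n n le_rfl hnm x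
    have hpos : ∀ j : ℕ, 0 ≤ exp (d * j) * ‖evolP A P (n + j) n x‖ := fun j => by positivity
    have hP : exp (d * ((m : ℝ) - n)) * ‖evolP A P m n x‖ ≤
        ∑' j : ℕ, exp (d * j) * ‖evolP A P (n + j) n x‖ := by
      have h := Summable.le_tsum hsum (m - n) (fun j _ => hpos j)
      rw [Nat.add_sub_cancel' hnm, Nat.cast_sub hnm] at h
      exact h
    have hQ : exp (d * ((m : ℝ) - n)) * ‖(1 - P n) x‖ ≤
        ∑ k ∈ Finset.Icc n m, exp (d * ((m : ℝ) - k)) * ‖evolQ A P k n x‖ := by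
      have hmem : n ∈ Finset.Icc n m := Finset.mem_Icc.mpr ⟨le_rfl, hnm⟩
      have h := Finset.single_le_sum
        (f := fun k : ℕ => exp (d * ((m : ℝ) - k)) * ‖evolQ A P k n x‖)
        (fun k _ => by positivity) hmem
      have e : evolQ A P n n x = (1 - P n) x := by
        simp only [evolQ, ContinuousLinearMap.comp_apply]
        exact evol_self A n _
      simpa [e] using h
    have ePnn : evolP A P n n x = P n x := by
      simp only [evolP, ContinuousLinearMap.comp_apply]
      exact evol_self A n _
    rw [ePnn] at hineq
    calc exp (d * ((m : ℝ) - n)) * (‖evolP A P m n x‖ + ‖(1 - P n) x‖)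
        = exp (d * ((m : ℝ) - n)) * ‖evolP A P m n x‖ +
            exp (d * ((m : ℝ) - n)) * ‖(1 - P n) x‖ := by ring
      _ ≤ (∑' j : ℕ, exp (d * j) * ‖evolP A P (n + j) n x‖) +
            ∑ k ∈ Finset.Icc n m, exp (d * ((m : ℝ) - k)) * ‖evolQ A P k n x‖ :=
          add_le_add hP hQ
      _ ≤ D * (exp (c * n) * ‖P n x‖ + exp (c * m) * ‖evolQ A P m n x‖) := hineq
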